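/- Let Δ be a centrally symmetric simplicial complex and w a homogeneous polynomial whose monomials are supported on faces of Δ. If for every vertex v of Δ, the partial derivative ∂w/∂x_v is symmetric under the involution α and supported on Δ, and α maps the support of ∂w/∂x_v into itself (i.e., ∂w/∂x_v is a symmetric stress), then w is squarefree, i.e., no monomial of w is divisible by the square of a variable. -/

import Mathlib

open MvPolynomial

lemma coeff_pderiv' {σ : Type*} [DecidableEq σ] (v : σ) (w : MvPolynomial σ ℝ)
    (N : σ →₀ ℕ) :
    coeff N (pderiv v w) = ((N v : ℝ) + 1) * coeff (N + Finsupp.single v 1) w := by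
  induction w using MvPolynomial.induction_on' with
  | monomial s a =>
    rw [pderiv_monomial, coeff_monomial, coeff_monomial]
    by_cases h : s = N + Finsupp.single v 1
    · subst h
      have h1 : N + Finsupp.single v 1 - Finsupp.single v 1 = N := by
        simp [add_tsub_cancel_right]
      rw [if_pos h1, if_pos rfl]
      simp [mul_comm]
    · rw [if_neg h, mul_zero]
      by_cases h2 : s - Finsupp.single v 1 = N
      · rw [if_pos h2]
        have hsv : s v = 0 := by
          by_contra hs
          apply h
          rw [← h2, tsub_add_cancel_of_le]
          rwa [Finsupp.single_le_iff, Nat.one_le_iff_ne_zero]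
        simp [hsv]
      · rw [if_neg h2]
  | add p q hp hq =>
    simp [hp, hq, mul_add]

/-- if every monomial of a homogeneous polynomial `w` is supported
on a face of a centrally symmetric complex `Δ`, and for every vertex `v` the
partial derivative `∂w/∂x_v` is a symmetric stress (symmetric and supported on
`Δ`), then `w` is squarefree. -/
theorem stmt_10 (n i : ℕ) (Δ : Finset (Finset (Fin n × Bool)))
    (hdown : ∀ s ∈ Δ, ∀ t ⊆ s, t ∈ Δ)
    (hmap : ∀ s ∈ Δ, s.image (fun u : Fin n × Bool => (u.1, !u.2)) ∈ Δ)
    (hfacefree : ∀ s ∈ Δ, s ≠ ∅ → s.image (fun u : Fin n × Bool => (u.1, !u.2)) ≠ s)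
    (w : MvPolynomial (Fin n × Bool) ℝ)
    (hhom : w.IsHomogeneous i)
    (hsupp : ∀ m ∈ w.support, m.support ∈ Δ)
    (hdsym : ∀ v : Fin n × Bool,
      rename (fun u : Fin n × Bool => (u.1, !u.2)) (pderiv v w) = pderiv v w)
    (hdsupp : ∀ v : Fin n × Bool, ∀ m ∈ (pderiv v w).support, m.support ∈ Δ) :
    ∀ m ∈ w.support, ∀ v, m v ≤ 1 := by
  intro m hm v
  by_contra hcon
  push_neg at hcon
  set α : Fin n × Bool → Fin n × Bool := fun u => (u.1, !u.2) with hα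
  have hinv : Function.Involutive α := by intro u; simp [hα]
  have hinj : Function.Injective α := hinv.injective
  have hmw : coeff m w ≠ 0 := by rwa [MvPolynomial.mem_support_iff] at hm
  set N : (Fin n × Bool) →₀ ℕ := m - Finsupp.single v 1 with hN
  have hNe : N + Finsupp.single v 1 = m := by
    rw [hN, tsub_add_cancel_of_le]
    rw [Finsupp.single_le_iff]; omega
  have hNv : 1 ≤ N v := by
    have : N v = m v - 1 := by simp [hN]
    omega
  have hNd : coeff N (pderiv v w) ≠ 0 := by
    rw [coeff_pderiv', hNe]
    refine mul_ne_zero ?_ hmw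
    positivity
  set M : (Fin n × Bool) →₀ ℕ := N.mapDomain α with hM
  have hMd : coeff M (pderiv v w) ≠ 0 := by
    rw [← hdsym v, hM, coeff_rename_mapDomain α hinj]
    exact hNd
  have hMαv : 1 ≤ M (α v) := by
    rw [hM, Finsupp.mapDomain_apply hinj]
    exact hNv
  have hMe : coeff (M + Finsupp.single v 1) w ≠ 0 := by
    intro h0
    rw [coeff_pderiv', h0, mul_zero] at hMd
    exact hMd rfl
  have hface : (M + Finsupp.single v 1).support ∈ Δ :=
    hsupp _ (MvPolynomial.mem_support_iff.mpr hMe)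
  have hvne : α v ≠ v := by
    intro h
    have := congrArg Prod.snd h
    simp [hα] at this
  have hsub : ({v, α v} : Finset (Fin n × Bool)) ⊆ (M + Finsupp.single v 1).support := by
    intro u hu
    rw [Finset.mem_insert, Finset.mem_singleton] at hu
    rw [Finsupp.mem_support_iff, Finsupp.add_apply]
    rcases hu with rfl | rfl
    · simp
    · have : (Finsupp.single v 1) (α v) = 0 := Finsupp.single_eq_of_ne' (Ne.symm hvne)
      omega
  have ht : ({v, α v} : Finset (Fin n × Bool)) ∈ Δ := hdown _ hface _ hsub
  refine hfacefree _ ht (by simp) ?_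
  have : ({v, α v} : Finset (Fin n × Bool)).image α = {α v, α (α v)} := by
    simp [Finset.image_insert]
  rw [this, hinv v]
  exact Finset.pair_comm (α v) v
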